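/- Let H ∈ [0, 1/2), set R := artanh(2H), let C ≥ 1, and define g_C : ℝ → ℝ by g_C(s) = (2H·sinh s + C·√(1−4H²))/cosh s and M_C := R + arcosh(C). Then g_C(M_C) = 1, and for every s ∈ ℝ one has |g_C(s)| < 1 if and only if s < R − arcosh(C) or s > M_C. In particular (M_C, +∞) is the maximal interval containing +∞ on which |g_C| < 1. -/

import Mathlib

open Real

/-- The inverse hyperbolic tangent. -/
noncomputable def artanh (x : ℝ) : ℝ := Real.log ((1 + x) / (1 - x)) / 2

/-- The inverse hyperbolic cosine (on `[1, ∞)`). -/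
noncomputable def arcosh (x : ℝ) : ℝ := Real.log (x + Real.sqrt (x ^ 2 - 1))

lemma arcosh_nonneg {C : ℝ} (hC : 1 ≤ C) : 0 ≤ _root_.arcosh C := by
  have : (1:ℝ) ≤ C + Real.sqrt (C ^ 2 - 1) := le_add_of_le_of_nonneg hC (Real.sqrt_nonneg _)
  exact Real.log_nonneg this

lemma cosh_arcosh {C : ℝ} (hC : 1 ≤ C) : Real.cosh (_root_.arcosh C) = C := by
  have h1 : (0:ℝ) < C + Real.sqrt (C ^ 2 - 1) :=
    lt_of_lt_of_le one_pos (le_add_of_le_of_nonneg hC (Real.sqrt_nonneg _))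
  have hsq : Real.sqrt (C ^ 2 - 1) ^ 2 = C ^ 2 - 1 :=
    Real.sq_sqrt (by nlinarith)
  rw [_root_.arcosh, Real.cosh_eq, Real.exp_neg, Real.exp_log h1]
  rw [div_eq_iff (by positivity : (2:ℝ) ≠ 0)]
  field_simp
  nlinarith [hsq]

lemma exp_artanh {a : ℝ} (h0 : 0 ≤ a) (h1 : a < 1) :
    Real.exp (_root_.artanh a) = Real.sqrt (1 + a) / Real.sqrt (1 - a) := by
  have hp : (0:ℝ) < 1 + a := by linarith
  have hm : (0:ℝ) < 1 - a := by linarith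
  have hu : (0:ℝ) < (1 + a) / (1 - a) := div_pos hp hm
  have hsq : Real.exp (_root_.artanh a) ^ 2 = (1 + a) / (1 - a) := by
    rw [← Real.exp_nat_mul, _root_.artanh]
    push_cast
    rw [show (2:ℝ) * (Real.log ((1 + a) / (1 - a)) / 2) = Real.log ((1+a)/(1-a)) by ring,
      Real.exp_log hu]
  have := Real.sqrt_sq (Real.exp_pos (_root_.artanh a)).le
  rw [← this, hsq, Real.sqrt_div hp.le]

lemma cosh_artanh {a : ℝ} (h0 : 0 ≤ a) (h1 : a < 1) :
    Real.cosh (_root_.artanh a) * Real.sqrt (1 - a ^ 2) = 1 := by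
  have hp : (0:ℝ) < 1 + a := by linarith
  have hm : (0:ℝ) < 1 - a := by linarith
  have he := exp_artanh h0 h1
  have hsp : Real.sqrt (1 + a) ^ 2 = 1 + a := Real.sq_sqrt hp.le
  have hsm : Real.sqrt (1 - a) ^ 2 = 1 - a := Real.sq_sqrt hm.le
  have hmul : Real.sqrt (1 - a ^ 2) = Real.sqrt (1 - a) * Real.sqrt (1 + a) := by
    rw [← Real.sqrt_mul hm.le]; ring_nf
  have hspne : Real.sqrt (1 + a) ≠ 0 := by positivity
  have hsmne : Real.sqrt (1 - a) ≠ 0 := by positivity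
  rw [Real.cosh_eq, he, Real.exp_neg, he, hmul]
  field_simp
  nlinarith [hsp, hsm]

lemma sinh_artanh {a : ℝ} (h0 : 0 ≤ a) (h1 : a < 1) :
    Real.sinh (_root_.artanh a) = a * Real.cosh (_root_.artanh a) := by
  have hp : (0:ℝ) < 1 + a := by linarith
  have hm : (0:ℝ) < 1 - a := by linarith
  have he := exp_artanh h0 h1
  have hsp : Real.sqrt (1 + a) ^ 2 = 1 + a := Real.sq_sqrt hp.le
  have hsm : Real.sqrt (1 - a) ^ 2 = 1 - a := Real.sq_sqrt hm.le
  have hspne : Real.sqrt (1 + a) ≠ 0 := by positivity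
  have hsmne : Real.sqrt (1 - a) ≠ 0 := by positivity
  rw [Real.sinh_eq, Real.cosh_eq, he, Real.exp_neg, he]
  field_simp
  nlinarith [hsp, hsm]

theorem gC_eq_one_at_MC_and_abs_lt_one_iff
    (H : ℝ) (hH0 : 0 ≤ H) (hH : H < 1 / 2) (R : ℝ) (hR : R = _root_.artanh (2 * H))
    (C : ℝ) (hC : 1 ≤ C) (g : ℝ → ℝ)
    (hg : ∀ s : ℝ, g s = (2 * H * Real.sinh s + C * Real.sqrt (1 - 4 * H ^ 2)) / Real.cosh s)
    (M : ℝ) (hM : M = R + _root_.arcosh C) :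
    g M = 1 ∧
    (∀ s : ℝ, |g s| < 1 ↔ (s < R - _root_.arcosh C ∨ M < s)) ∧
    ∀ I : Set ℝ, IsConnected I → (∀ s ∈ I, |g s| < 1) →
      (∀ b : ℝ, ∃ s ∈ I, b < s) → I ⊆ Set.Ioi M := by
  subst hM
  have ha0 : (0:ℝ) ≤ 2 * H := by linarith
  have ha1 : 2 * H < 1 := by linarith
  have hD : Real.sqrt (1 - 4 * H ^ 2) = Real.sqrt (1 - (2 * H) ^ 2) := by ring_nf
  have h1 : Real.sinh R = 2 * H * Real.cosh R := hR ▸ sinh_artanh ha0 ha1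
  have h2 : Real.cosh R * Real.sqrt (1 - (2 * H) ^ 2) = 1 := hR ▸ cosh_artanh ha0 ha1
  have hcRpos := Real.cosh_pos (x := R)
  have harc : 0 ≤ _root_.arcosh C := _root_.arcosh_nonneg hC
  -- key form of g
  have key : ∀ s : ℝ, g s = (Real.sinh R * Real.sinh s + C) / (Real.cosh R * Real.cosh s) := by
    intro s
    rw [hg, hD, div_eq_div_iff (Real.cosh_pos _).ne' (mul_pos hcRpos (Real.cosh_pos _)).ne']
    linear_combination Real.sinh s * Real.cosh s * h1.symm + C * Real.cosh s * h2
  have hcoshM : Real.cosh (R + _root_.arcosh C - R) = C := by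
    rw [add_sub_cancel_left, _root_.cosh_arcosh hC]
  have hgM : g (R + _root_.arcosh C) = 1 := by
    rw [key]
    rw [div_eq_one_iff_eq (mul_pos hcRpos (Real.cosh_pos _)).ne']
    have := Real.cosh_sub (R + _root_.arcosh C) R
    nlinarith [this, hcoshM]
  refine ⟨hgM, ?_, ?_⟩
  · intro s
    have hpos : (0:ℝ) < Real.cosh R * Real.cosh s := mul_pos hcRpos (Real.cosh_pos _)
    rw [key s, abs_div, abs_of_pos hpos, div_lt_one hpos, abs_lt]
    have hsub : Real.cosh R * Real.cosh s - Real.sinh R * Real.sinh s = Real.cosh (s - R) := by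
      rw [Real.cosh_sub]; ring
    have hadd : Real.cosh R * Real.cosh s + Real.sinh R * Real.sinh s = Real.cosh (s + R) := by
      rw [Real.cosh_add]; ring
    constructor
    · rintro ⟨-, hlt⟩
      have hcc : Real.cosh (R + _root_.arcosh C - R) < Real.cosh (s - R) := by nlinarith [hsub, hcoshM]
      rw [Real.cosh_lt_cosh, add_sub_cancel_left, abs_of_nonneg harc] at hcc
      rcases lt_abs.mp hcc with h | h
      · right; linarith
      · left; linarith
    · intro hor
      have habs : _root_.arcosh C < |s - R| := by
        rcases hor with h | h
        · exact lt_abs.mpr (Or.inr (by linarith))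
        · exact lt_abs.mpr (Or.inl (by linarith))
      have hcc : C < Real.cosh (s - R) := by
        rw [← hcoshM, Real.cosh_lt_cosh, add_sub_cancel_left, abs_of_nonneg harc]
        exact habs
      have hC' : -C < Real.cosh (s + R) := lt_of_lt_of_le (by linarith) (Real.one_le_cosh _)
      constructor
      · nlinarith [hadd]
      · nlinarith [hsub]
  · intro I hconn hlt hub s hs
    by_contra hsM
    simp only [Set.mem_Ioi, not_lt] at hsM
    obtain ⟨t, htI, hMt⟩ := hub (R + _root_.arcosh C)
    have hmem : R + _root_.arcosh C ∈ I :=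
      hconn.isPreconnected.ordConnected.out hs htI ⟨hsM, hMt.le⟩
    have := hlt _ hmem
    rw [hgM] at this
    simp at this
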